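/- Let G be a finite group, H, K ≤ G subgroups, and k a commutative ring. Then there is an isomorphism of kK-modules Res^G_K (kG ⊗_{kH} N) ≅ ⊕_{[x] ∈ K\G/H} kK ⊗_{k(K ∩ xHx⁻¹)} (x·N), for every kH-module N, where x·N denotes N with the (K ∩ xHx⁻¹)-action given by u·n = (x⁻¹ux)n (Mackey decomposition formula for modules). -/

import Mathlib

namespace Stmt

variable {k : Type*} [CommRing k]
variable {Γ : Type*} [Group Γ] (H : Subgroup Γ)
variable {N : Type*} [AddCommGroup N] [Module k N]
variable (ρ : Representation k H N)

/-- Concrete model of the induced module `kΓ ⊗_{kH} N`: functions `f : Γ → N`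
with `f (g * h) = ρ h⁻¹ (f g)`; the elementary tensor `g ⊗ n` corresponds to the
function supported on the coset `g H` with value `ρ (x⁻¹ g) n` at `x ∈ g H`. -/
def Ind : Submodule k (Γ → N) where
  carrier := {f | ∀ (g : Γ) (h : H), f (g * h) = ρ h⁻¹ (f g)}
  add_mem' := by
    intro a b ha hb g h
    simp only [Pi.add_apply, ha g h, hb g h, map_add]
  zero_mem' := by intro g h; simp
  smul_mem' := by
    intro c f hf g h
    simp only [Pi.smul_apply, hf g h, map_smul]

theorem mem_Ind {f : Γ → N} : f ∈ Ind H ρ ↔ ∀ (g : Γ) (h : H), f (g * h) = ρ h⁻¹ (f g) :=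
  Iff.rfl

/-- The representation of `Γ` on the induced module, `(g • f) x = f (g⁻¹ x)`. -/
def indRep : Representation k Γ (Ind H ρ) where
  toFun g :=
    { toFun := fun f => ⟨fun x => f.1 (g⁻¹ * x), fun x h => by
        simpa [mul_assoc] using f.2 (g⁻¹ * x) h⟩
      map_add' := fun f f' => rfl
      map_smul' := fun c f => rfl }
  map_one' := by
    refine LinearMap.ext fun f => Subtype.ext (funext fun x => ?_)
    simp
  map_mul' g g' := by
    refine LinearMap.ext fun f => Subtype.ext (funext fun x => ?_)
    simp [mul_assoc]

/-- The elementary tensor `g ⊗ n` in the induced module. -/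
def elt [DecidablePred (· ∈ H)] (g : Γ) (n : N) : Ind H ρ :=
  ⟨fun x => if hx : x⁻¹ * g ∈ H then ρ ⟨x⁻¹ * g, hx⟩ n else 0, by
    intro x h
    dsimp only
    have key : (x * (h : Γ))⁻¹ * g = (h⁻¹ : H) * (x⁻¹ * g) := by
      simp [mul_inv_rev, mul_assoc]
    by_cases hx : x⁻¹ * g ∈ H
    · have hmem : (x * (h : Γ))⁻¹ * g ∈ H := by
        rw [key]; exact H.mul_mem (H.inv_mem h.2) hx
      simp only [hmem, hx, dif_pos]
      have : (⟨(x * (h : Γ))⁻¹ * g, hmem⟩ : H) = h⁻¹ * ⟨x⁻¹ * g, hx⟩ := by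
        ext; simpa using key
      rw [this, map_mul]
      rfl
    · have hmem : ¬ ((x * (h : Γ))⁻¹ * g ∈ H) := by
        rw [key]
        intro hc
        exact hx (by simpa using H.mul_mem (H.inv_mem (H.inv_mem h.2)) hc)
      rw [dif_neg hmem, dif_neg hx, map_zero]⟩


variable {G : Type} [Group G]

/-- The subgroup `K ∩ xHx⁻¹`, viewed as a subgroup of `K`. -/
def interSub (H K : Subgroup G) (x : G) : Subgroup K :=
  (Subgroup.map (MulAut.conj x).toMonoidHom H).subgroupOf K

/-- Conjugation `u ↦ x⁻¹ u x`, a homomorphism `K ∩ xHx⁻¹ → H`. -/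
def conjHom (H K : Subgroup G) (x : G) : interSub H K x →* H where
  toFun u := ⟨x⁻¹ * ((u : K) : G) * x, by
    obtain ⟨h, hh, he⟩ := u.2
    have : ((u : K) : G) = x * h * x⁻¹ := by
      simpa [MulAut.conj] using he.symm
    simpa [this, mul_assoc] using hh⟩
  map_one' := by ext; simp
  map_mul' u v := by
    ext
    simp only [Subgroup.coe_mul, Submonoid.coe_mul]
    group

open Representation in
/-- Mackey decomposition formula for modules: for subgroups
`H, K ≤ G`, a set `R` of representatives of the double cosets `K\G/H` and a
`kH`-module `N`, there is a `kK`-linear isomorphism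
`Res^G_K (kG ⊗_{kH} N) ≅ ⊕_{x ∈ R} kK ⊗_{k(K ∩ xHx⁻¹)} (x·N)`,
where `x·N` is `N` with the `(K ∩ xHx⁻¹)`-action `u • n = (x⁻¹ux)n`,
i.e. the representation `ρ.comp (conjHom H K x)`. -/
theorem statement11 (k : Type) [CommRing k] (_ : Fintype G)
    (H K : Subgroup G)
    (N : Type) [AddCommGroup N] [Module k N] (ρ : Representation k H N)
    (R : Finset G)
    (hR : ∀ g : G, ∃! r, r ∈ R ∧ g ∈ DoubleCoset.doubleCoset r (K : Set G) (H : Set G)) :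
    ∃ φ : (Ind H ρ : Submodule k (G → N)) ≃ₗ[k]
        (Π r : {x // x ∈ R}, (Ind (interSub H K (r : G)) (ρ.comp (conjHom H K (r : G))) :
          Submodule k (K → N))),
      ∀ (u : K) (f : Ind H ρ) (r : {x // x ∈ R}),
        φ (indRep H ρ (u : G) f) r =
          indRep (interSub H K (r : G)) (ρ.comp (conjHom H K (r : G))) u (φ f r) := by
  classical
  -- the forward linear map
  have hmemφ : ∀ (f : (Ind H ρ : Submodule k (G → N))) (r : {x // x ∈ R}),
      (fun u : K => f.1 ((u : G) * (r : G))) ∈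
        Ind (interSub H K (r : G)) (ρ.comp (conjHom H K (r : G))) := by
    intro f r u v
    have h1 : (((u * v : K) : G)) * (r : G) =
        ((u : G) * (r : G)) * ((conjHom H K (r : G) v : H) : G) := by
      simp only [Subgroup.coe_mul, conjHom, MonoidHom.coe_mk, OneHom.coe_mk]
      group
    dsimp only
    rw [h1, f.2, MonoidHom.comp_apply, map_inv (conjHom H K (r : G))]
  set φ₀ : (Ind H ρ : Submodule k (G → N)) →ₗ[k]
      (Π r : {x // x ∈ R}, (Ind (interSub H K (r : G)) (ρ.comp (conjHom H K (r : G))) :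
        Submodule k (K → N))) :=
    { toFun := fun f r => ⟨fun u => f.1 ((u : G) * (r : G)), hmemφ f r⟩
      map_add' := fun f f' => rfl
      map_smul' := fun c f => rfl } with hφ₀def
  -- choice of representatives and decompositions
  have rep_unique : ∀ g r, r ∈ R → g ∈ DoubleCoset.doubleCoset r (K : Set G) (H : Set G) →
      (hR g).choose = r := fun g r h1 h2 => ((hR g).choose_spec.2 r ⟨h1, h2⟩).symm
  have rep_mem : ∀ g : G, (hR g).choose ∈ R := fun g => (hR g).choose_spec.1.1
  have hd : ∀ g : G, ∃ u ∈ (K : Set G), ∃ h ∈ (H : Set G), g = u * (hR g).choose * h :=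
    fun g => DoubleCoset.mem_doubleCoset.mp (hR g).choose_spec.1.2
  choose uu hu hh hmemh hg using hd
  -- key independence lemma
  have key : ∀ (r : G) (Fr : (Ind (interSub H K r) (ρ.comp (conjHom H K r)) :
        Submodule k (K → N))) (u u' : K) (h h' : H),
      (u : G) * r * (h : G) = (u' : G) * r * (h' : G) →
      ρ h⁻¹ (Fr.1 u) = ρ h'⁻¹ (Fr.1 u') := by
    intro r Fr u u' h h' heq
    have h2 : (u : G) = ((u' : G) * r * (h' : G)) * (h : G)⁻¹ * r⁻¹ := by
      rw [← heq]; group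
    have hv : ((u'⁻¹ * u : K) : G) = r * ((h' : G) * (h : G)⁻¹) * r⁻¹ := by
      push_cast
      rw [h2]; group
    have hvmem : (u'⁻¹ * u : K) ∈ interSub H K r := by
      rw [interSub, Subgroup.mem_subgroupOf]
      exact ⟨(h' : G) * (h : G)⁻¹,
        H.mul_mem h'.2 (H.inv_mem h.2), by simpa [MulAut.conj] using hv.symm⟩
    set vv : interSub H K r := ⟨u'⁻¹ * u, hvmem⟩ with hvv
    have hconj : conjHom H K r vv = h' * h⁻¹ := by
      ext
      simp only [hvv, conjHom, MonoidHom.coe_mk, OneHom.coe_mk]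
      push_cast
      rw [h2]; group
    have hu_eq : u' * (vv : K) = u := by
      ext; simp [hvv]
    have hFr := Fr.2 u' vv
    rw [hu_eq] at hFr
    have hcomp : (MonoidHom.comp ρ (conjHom H K r)) vv⁻¹ = ρ ((conjHom H K r vv)⁻¹) := by
      rw [MonoidHom.comp_apply, map_inv]
    rw [hcomp, hconj] at hFr
    rw [hFr, ← Module.End.mul_apply, ← map_mul]
    congr 1
    group
  -- bijectivity
  have hinj : Function.Injective φ₀ := by
    rw [← LinearMap.ker_eq_bot, eq_bot_iff]
    intro f hf
    rw [LinearMap.mem_ker] at hf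
    refine Subtype.ext (funext fun g => ?_)
    have h1 : f.1 g = ρ ⟨hh g, hmemh g⟩⁻¹ (f.1 (uu g * (hR g).choose)) := by
      conv_lhs => rw [hg g]
      exact f.2 (uu g * (hR g).choose) ⟨hh g, hmemh g⟩
    have h2 : f.1 (uu g * (hR g).choose) = 0 := by
      have := congrFun (congrArg (fun F => (F ⟨(hR g).choose, rep_mem g⟩ :
        (Ind (interSub H K ((hR g).choose)) (ρ.comp (conjHom H K ((hR g).choose))) :
          Submodule k (K → N))).1) hf) ⟨uu g, hu g⟩
      simpa [hφ₀def] using this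
    rw [h1, h2, map_zero]
    rfl
  have hsurj : Function.Surjective φ₀ := by
    intro F
    set f0 : G → N := fun g =>
      ρ ⟨hh g, hmemh g⟩⁻¹ ((F ⟨(hR g).choose, rep_mem g⟩).1 ⟨uu g, hu g⟩) with hf0
    have val : ∀ (g : G) (r : G) (hr : r ∈ R) (u' : K) (h' : H),
        g = (u' : G) * r * (h' : G) →
        f0 g = ρ h'⁻¹ ((F ⟨r, hr⟩).1 u') := by
      intro g r hr u' h' hdec
      have hrepr : (hR g).choose = r :=
        rep_unique g r hr (DoubleCoset.mem_doubleCoset.mpr ⟨u', u'.2, h', h'.2, hdec⟩)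
      subst hrepr
      exact key _ _ ⟨uu g, hu g⟩ u' ⟨hh g, hmemh g⟩ h' (by rw [← hg g, ← hdec])
    have hf0mem : f0 ∈ Ind H ρ := by
      intro g h'
      have hdec : g * (h' : G) = (uu g : G) * (hR g).choose * ((⟨hh g, hmemh g⟩ * h' : H) : G) := by
        push_cast
        conv_lhs => rw [hg g]
        group
      rw [val (g * h') ((hR g).choose) (rep_mem g) ⟨uu g, hu g⟩ (⟨hh g, hmemh g⟩ * h') hdec]
      rw [mul_inv_rev, map_mul, Module.End.mul_apply]
    refine ⟨⟨f0, hf0mem⟩, ?_⟩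
    funext r
    refine Subtype.ext (funext fun w => ?_)
    have : f0 ((w : G) * (r : G)) = ρ (1 : H)⁻¹ ((F ⟨(r : G), r.2⟩).1 w) :=
      val _ (r : G) r.2 w 1 (by simp)
    simpa [hφ₀def] using this
  refine ⟨LinearEquiv.ofBijective φ₀ ⟨hinj, hsurj⟩, ?_⟩
  intro u f r
  refine Subtype.ext (funext fun w => ?_)
  show f.1 ((u : G)⁻¹ * ((w : G) * (r : G))) = f.1 (((u⁻¹ * w : K) : G) * (r : G))
  push_cast [mul_assoc]
  try rfl

end Stmt
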